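/- For every n ∈ ℕ: ∫_{−π}^{π} (V_{2n}(t) − V_n(t))² dt = π·(n + 1/(4n)). -/

import Mathlib

open Real Finset MeasureTheory

/-- The Dirichlet kernel `D_k(t) = 1/2 + Σ_{ν=1}^{k} cos(νt)`. -/
noncomputable def dirichletK (k : ℕ) (t : ℝ) : ℝ :=
  1 / 2 + ∑ ν ∈ Finset.Icc 1 k, Real.cos ((ν : ℝ) * t)

/-- The de la Vallée Poussin kernel `V_m(t) = (1/m) Σ_{k=m}^{2m−1} D_k(t)`. -/
noncomputable def vallee (m : ℕ) (t : ℝ) : ℝ :=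
  (1 / (m : ℝ)) * ∑ k ∈ Finset.Icc m (2 * m - 1), dirichletK k t

lemma integral_cos_int (m : ℤ) :
    ∫ t in (-π)..π, Real.cos ((m : ℝ) * t) = if m = 0 then 2 * π else 0 := by
  rcases eq_or_ne m 0 with h | h
  · simp [h, two_mul]
  · have hc : (m : ℝ) ≠ 0 := Int.cast_ne_zero.mpr h
    rw [if_neg h]
    rw [intervalIntegral.integral_comp_mul_left Real.cos hc]
    rw [integral_cos]
    have h1 : Real.sin ((m:ℝ) * π) = 0 := Real.sin_int_mul_pi m
    have h2 : Real.sin ((m:ℝ) * (-π)) = 0 := by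
      rw [mul_neg, Real.sin_neg, h1, neg_zero]
    simp [h1, h2]

lemma cos_orth (j k : ℕ) (hj : 1 ≤ j) (hk : 1 ≤ k) :
    ∫ t in (-π)..π, Real.cos ((j : ℝ) * t) * Real.cos ((k : ℝ) * t)
      = if j = k then π else 0 := by
  have key : ∀ t : ℝ, Real.cos ((j : ℝ) * t) * Real.cos ((k : ℝ) * t)
      = (Real.cos ((((j : ℤ) - k : ℤ) : ℝ) * t) + Real.cos ((((j : ℤ) + k : ℤ) : ℝ) * t)) / 2 := by
    intro t
    push_cast
    rw [sub_mul, add_mul, Real.cos_sub, Real.cos_add]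
    ring
  simp only [key]
  have hi1 : IntervalIntegrable (fun t => Real.cos ((((j : ℤ) - k : ℤ) : ℝ) * t)) volume (-π) π := by
    apply Continuous.intervalIntegrable; fun_prop
  have hi2 : IntervalIntegrable (fun t => Real.cos ((((j : ℤ) + k : ℤ) : ℝ) * t)) volume (-π) π := by
    apply Continuous.intervalIntegrable; fun_prop
  rw [intervalIntegral.integral_div, intervalIntegral.integral_add hi1 hi2,
    integral_cos_int, integral_cos_int]
  have hne : (j : ℤ) + k ≠ 0 := by omega
  rcases eq_or_ne j k with h | h
  · rw [if_pos h, if_pos (by omega : (j:ℤ) - k = 0), if_neg hne]; ring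
  · rw [if_neg h, if_neg (by omega : (j:ℤ) - k ≠ 0), if_neg hne]; ring

lemma vallee_eq (m N : ℕ) (hm : 1 ≤ m) (hN : 2 * m - 1 ≤ N) (t : ℝ) :
    vallee m t = 1 / 2 + ∑ ν ∈ Finset.Icc 1 N,
      ((min (2 * m - ν) m : ℕ) : ℝ) / m * Real.cos ((ν : ℝ) * t) := by
  have hm0 : (m : ℝ) ≠ 0 := Nat.cast_ne_zero.mpr (by omega)
  unfold vallee dirichletK
  rw [Finset.sum_add_distrib, Finset.sum_const, Nat.card_Icc]
  have hcard : 2 * m - 1 + 1 - m = m := by omega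
  rw [hcard]
  have inner : ∀ k ∈ Finset.Icc m (2 * m - 1),
      (∑ ν ∈ Finset.Icc 1 k, Real.cos ((ν : ℝ) * t))
        = ∑ ν ∈ Finset.Icc 1 N, if ν ≤ k then Real.cos ((ν : ℝ) * t) else 0 := by
    intro k hk
    rw [Finset.mem_Icc] at hk
    rw [Finset.sum_ite, Finset.sum_const_zero, add_zero]
    apply Finset.sum_congr _ (fun _ _ => rfl)
    ext x
    simp only [Finset.mem_Icc, Finset.mem_filter]
    omega
  rw [Finset.sum_congr rfl inner, Finset.sum_comm]
  have col : ∀ ν ∈ Finset.Icc 1 N,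
      (∑ k ∈ Finset.Icc m (2 * m - 1), if ν ≤ k then Real.cos ((ν : ℝ) * t) else 0)
        = ((min (2 * m - ν) m : ℕ) : ℝ) * Real.cos ((ν : ℝ) * t) := by
    intro ν hν
    rw [Finset.sum_ite, Finset.sum_const_zero, add_zero, Finset.sum_const]
    have hf : Finset.filter (fun k => ν ≤ k) (Finset.Icc m (2 * m - 1))
        = Finset.Icc (max m ν) (2 * m - 1) := by
      ext x; simp only [Finset.mem_Icc, Finset.mem_filter]; omega
    rw [hf, Nat.card_Icc]
    have : 2 * m - 1 + 1 - max m ν = min (2 * m - ν) m := by omega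
    rw [this, nsmul_eq_mul]
  rw [Finset.sum_congr rfl col, mul_add, Finset.mul_sum]
  congr 1
  · rw [nsmul_eq_mul]; field_simp
  · apply Finset.sum_congr rfl
    intro ν _
    ring

lemma sumsq (m : ℕ) : ∑ j ∈ Finset.range m, (j : ℝ) ^ 2
    = m * (m - 1) * (2 * m - 1) / 6 := by
  induction m with
  | zero => simp
  | succ k ih =>
    rw [Finset.sum_range_succ, ih]
    push_cast
    ring

lemma sum_pieces (n : ℕ) (hn : 1 ≤ n) (a : ℕ → ℝ)
    (h1 : ∀ ν ∈ Finset.Ioc 0 n, a ν = 0)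
    (h2 : ∀ ν ∈ Finset.Ioc n (2*n), a ν = (((ν : ℝ) - n) / n) ^ 2)
    (h3 : ∀ ν ∈ Finset.Ioc (2*n) (4*n), a ν = ((4*(n:ℝ) - ν) / (2*n)) ^ 2) :
    ∑ ν ∈ Finset.Icc 1 (4*n), a ν = (n : ℝ) + 1 / (4 * n) := by
  have hn0 : (n : ℝ) ≠ 0 := Nat.cast_ne_zero.mpr (by omega)
  have e0 : Finset.Icc 1 (4*n) = Finset.Ioc 0 (4*n) := by
    ext x; simp [Finset.mem_Icc, Finset.mem_Ioc]; omega
  rw [e0, ← Finset.sum_Ioc_consecutive _ (by omega : 0 ≤ 2*n) (by omega : 2*n ≤ 4*n),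
    ← Finset.sum_Ioc_consecutive _ (by omega : 0 ≤ n) (by omega : n ≤ 2*n)]
  rw [Finset.sum_congr rfl h1, Finset.sum_congr rfl h2, Finset.sum_congr rfl h3,
    Finset.sum_const_zero]
  have p2 : ∑ ν ∈ Finset.Ioc n (2*n), (((ν : ℝ) - n) / n) ^ 2
      = ∑ j ∈ Finset.range (n+1), ((j : ℝ) / n) ^ 2 := by
    rw [Finset.sum_range_succ']
    simp only [Nat.cast_zero, zero_div, zero_pow, add_zero, ne_eq, OfNat.ofNat_ne_zero,
      not_false_eq_true]
    apply Finset.sum_nbij' (fun ν => ν - (n+1)) (fun j => j + (n+1))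
    · intro ν hν; rw [Finset.mem_Ioc] at hν; rw [Finset.mem_range]; omega
    · intro j hj; rw [Finset.mem_range] at hj; rw [Finset.mem_Ioc]; omega
    · intro ν hν; rw [Finset.mem_Ioc] at hν; omega
    · intro j hj; omega
    · intro ν hν
      rw [Finset.mem_Ioc] at hν
      have h' : (ν - (n+1)) + 1 = ν - n := by omega
      rw [h', Nat.cast_sub hν.1.le]
  have p3 : ∑ ν ∈ Finset.Ioc (2*n) (4*n), ((4*(n:ℝ) - ν) / (2*n)) ^ 2
      = ∑ j ∈ Finset.range (2*n), ((j : ℝ) / (2*n)) ^ 2 := by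
    apply Finset.sum_nbij' (fun ν => 4*n - ν) (fun j => 4*n - j)
    · intro ν hν; rw [Finset.mem_Ioc] at hν; rw [Finset.mem_range]; omega
    · intro j hj; rw [Finset.mem_range] at hj; rw [Finset.mem_Ioc]; omega
    · intro ν hν; rw [Finset.mem_Ioc] at hν; omega
    · intro j hj; rw [Finset.mem_range] at hj; omega
    · intro ν hν
      rw [Finset.mem_Ioc] at hν
      have : ((4*n - ν : ℕ) : ℝ) = 4*(n : ℝ) - ν := by
        have : ν ≤ 4*n := hν.2
        push_cast [Nat.cast_sub this]; ring
      rw [this]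
  rw [p2, p3]
  simp only [div_pow, ← Finset.sum_div]
  rw [sumsq, sumsq]
  push_cast
  field_simp
  ring

/-- For every `n ≥ 1`: `∫_{−π}^{π} (V_{2n}(t) − V_n(t))² dt = π·(n + 1/(4n))`. -/
theorem vallee_diff_sq_integral (n : ℕ) (hn : 1 ≤ n) :
    ∫ t in (-π)..π, (vallee (2 * n) t - vallee n t) ^ 2 = π * ((n : ℝ) + 1 / (4 * n)) := by
  have hn0 : (n : ℝ) ≠ 0 := Nat.cast_ne_zero.mpr (by omega)
  set a : ℕ → ℝ := fun ν =>
    ((min (2 * (2 * n) - ν) (2 * n) : ℕ) : ℝ) / (2 * n)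
      - ((min (2 * n - ν) n : ℕ) : ℝ) / n with ha
  have hdiff : ∀ t : ℝ, vallee (2 * n) t - vallee n t
      = ∑ ν ∈ Finset.Icc 1 (4 * n), a ν * Real.cos ((ν : ℝ) * t) := by
    intro t
    rw [vallee_eq (2 * n) (4 * n) (by omega) (by omega) t,
      vallee_eq n (4 * n) hn (by omega) t]
    rw [add_sub_add_left_eq_sub, ← Finset.sum_sub_distrib]
    apply Finset.sum_congr rfl
    intro ν _
    rw [ha]
    push_cast
    ring
  simp only [hdiff]
  have expand : ∀ t : ℝ, (∑ ν ∈ Finset.Icc 1 (4 * n), a ν * Real.cos ((ν : ℝ) * t)) ^ 2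
      = ∑ ν ∈ Finset.Icc 1 (4 * n), ∑ μ ∈ Finset.Icc 1 (4 * n),
          (a ν * a μ) * (Real.cos ((ν : ℝ) * t) * Real.cos ((μ : ℝ) * t)) := by
    intro t
    rw [sq, Finset.sum_mul_sum]
    apply Finset.sum_congr rfl
    intro ν _
    apply Finset.sum_congr rfl
    intro μ _
    ring
  simp only [expand]
  rw [intervalIntegral.integral_finset_sum (fun ν _ => by
    apply Continuous.intervalIntegrable
    apply continuous_finset_sum
    intro μ _
    fun_prop : ∀ ν ∈ Finset.Icc 1 (4 * n), IntervalIntegrable (fun t => ∑ μ ∈ Finset.Icc 1 (4 * n),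
      (a ν * a μ) * (Real.cos ((ν : ℝ) * t) * Real.cos ((μ : ℝ) * t))) volume (-π) π)]
  have step : ∀ ν ∈ Finset.Icc 1 (4 * n),
      (∫ t in (-π)..π, ∑ μ ∈ Finset.Icc 1 (4 * n),
          (a ν * a μ) * (Real.cos ((ν : ℝ) * t) * Real.cos ((μ : ℝ) * t)))
        = a ν ^ 2 * π := by
    intro ν hν
    rw [Finset.mem_Icc] at hν
    rw [intervalIntegral.integral_finset_sum (fun μ _ => by
      apply Continuous.intervalIntegrable; fun_prop : ∀ μ ∈ Finset.Icc 1 (4 * n),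
        IntervalIntegrable (fun t => (a ν * a μ) * (Real.cos ((ν : ℝ) * t) * Real.cos ((μ : ℝ) * t)))
          volume (-π) π)]
    have term : ∀ μ ∈ Finset.Icc 1 (4 * n),
        (∫ t in (-π)..π, (a ν * a μ) * (Real.cos ((ν : ℝ) * t) * Real.cos ((μ : ℝ) * t)))
          = if ν = μ then a ν * a μ * π else 0 := by
      intro μ hμ
      rw [Finset.mem_Icc] at hμ
      rw [intervalIntegral.integral_const_mul, cos_orth ν μ hν.1 hμ.1]
      rcases eq_or_ne ν μ with h | h
      · rw [if_pos h, if_pos h]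
      · rw [if_neg h, if_neg h, mul_zero]
    rw [Finset.sum_congr rfl term, Finset.sum_ite_eq]
    rw [if_pos (Finset.mem_Icc.mpr hν), sq]
  rw [Finset.sum_congr rfl step]
  have key : ∑ ν ∈ Finset.Icc 1 (4 * n), a ν ^ 2 = (n : ℝ) + 1 / (4 * n) := by
    apply sum_pieces n hn
    · intro ν hν
      rw [Finset.mem_Ioc] at hν
      have e1 : min (2 * (2 * n) - ν) (2 * n) = 2 * n := by omega
      have e2 : min (2 * n - ν) n = n := by omega
      rw [ha]
      simp only [e1, e2]
      have h2n : ((2 * n : ℕ) : ℝ) ≠ 0 := Nat.cast_ne_zero.mpr (by omega)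
      push_cast
      field_simp
      norm_num
    · intro ν hν
      rw [Finset.mem_Ioc] at hν
      have e1 : min (2 * (2 * n) - ν) (2 * n) = 2 * n := by omega
      have e2 : min (2 * n - ν) n = 2 * n - ν := by omega
      rw [ha]
      simp only [e1, e2]
      rw [Nat.cast_sub hν.2]
      push_cast
      field_simp
      ring
    · intro ν hν
      rw [Finset.mem_Ioc] at hν
      have e1 : min (2 * (2 * n) - ν) (2 * n) = 2 * (2 * n) - ν := by omega
      have e2 : min (2 * n - ν) n = 0 := by omega
      rw [ha]
      simp only [e1, e2]
      rw [Nat.cast_sub (by omega : ν ≤ 2 * (2 * n))]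
      push_cast
      field_simp
      ring
  rw [← Finset.sum_mul, key, mul_comm]
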